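/- Let G be a finite p-group of nilpotency class 2. Write G/Z(G) = C_{p^{a₁}} × ⋯ × C_{p^{a_r}} and G/γ₂(G) = C_{p^{b₁}} × ⋯ × C_{p^{b_s}} with a₁ ≥ ⋯ ≥ a_r > 0 and b₁ ≥ ⋯ ≥ b_s > 0. Let p^c be the common exponent of G/Z(G) and γ₂(G), let k be the largest index with a₁ = ⋯ = a_k = c, let M̄ = C_{p^{a₁}} × ⋯ × C_{p^{a_k}} and N̄ = C_{p^{b₁}} × ⋯ × C_{p^{b_k}}. Then every central automorphism of G fixes Z(G) element-wise if and only if r = s, (G/Z(G))/M̄ ≅ (G/γ₂(G))/N̄, and the exponents of Z(G) and γ₂(G) are equal. -/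

import Mathlib

open Subgroup Function Finset

section Toolkit

variable {p : ℕ}

lemma card_range_mul_card_ker {X Y : Type*} [Group X] [Group Y] [Finite X] (f : X →* Y) :
    Nat.card f.range * Nat.card f.ker = Nat.card X := by
  rw [Subgroup.card_eq_card_quotient_mul_card_subgroup f.ker]
  congr 1
  exact (Nat.card_congr (QuotientGroup.quotientKerEquivRange f).toEquiv).symm

lemma card_ker_pow_pi {ι : Type*} [Fintype ι] (M : ι → Type*) [∀ i, CommGroup (M i)] (n : ℕ) :
    Nat.card ((powMonoidHom n : (∀ i, M i) →* (∀ i, M i)).ker) =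
      ∏ i, Nat.card ((powMonoidHom n : M i →* M i).ker) := by
  rw [← Nat.card_pi]
  refine Nat.card_congr ⟨fun x i => ⟨x.1 i, ?_⟩, fun F => ⟨fun i => (F i).1, ?_⟩, ?_, ?_⟩
  · have hx := x.2
    rw [MonoidHom.mem_ker, powMonoidHom_apply] at hx
    rw [MonoidHom.mem_ker, powMonoidHom_apply]
    exact congrFun hx i
  · rw [MonoidHom.mem_ker, powMonoidHom_apply]
    funext i
    have h := (F i).2
    rw [MonoidHom.mem_ker, powMonoidHom_apply] at h
    exact h
  · intro x; ext i; rfl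
  · intro F; ext i; rfl

lemma card_ker_pow_zmod (hp : p.Prime) (e m : ℕ) :
    Nat.card ((powMonoidHom (p ^ m) :
        Multiplicative (ZMod (p ^ e)) →* Multiplicative (ZMod (p ^ e))).ker) =
      p ^ min e m := by
  haveI : NeZero (p ^ e) := ⟨(pow_pos hp.pos e).ne'⟩
  haveI : NeZero (p ^ min e m) := ⟨(pow_pos hp.pos _).ne'⟩
  have hje : min e m ≤ e := min_le_left _ _
  have hjm : min e m ≤ m := min_le_right _ _
  have key : ∀ u : ZMod (p ^ e), ((p ^ m * u.val : ℕ) : ZMod (p ^ e)) = (p ^ m) • u := by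
    intro u
    rw [nsmul_eq_mul, Nat.cast_mul, ZMod.natCast_val, ZMod.cast_id]
  have hmem : ∀ x : Multiplicative (ZMod (p ^ e)),
      x ∈ (powMonoidHom (p ^ m) :
        Multiplicative (ZMod (p ^ e)) →* Multiplicative (ZMod (p ^ e))).ker ↔
        (p ^ e : ℕ) ∣ p ^ m * x.toAdd.val := by
    intro x
    rw [MonoidHom.mem_ker, powMonoidHom_apply, ← ZMod.natCast_eq_zero_iff,
      key x.toAdd]
    constructor
    · intro h
      simpa [toAdd_pow] using congrArg Multiplicative.toAdd h
    · intro h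
      apply Multiplicative.toAdd.injective
      simpa [toAdd_pow] using h
  have hcast : ∀ t : ZMod (p ^ min e m),
      (p ^ (e - min e m) * t.val : ℕ) < p ^ e := by
    intro t
    calc p ^ (e - min e m) * t.val < p ^ (e - min e m) * p ^ min e m :=
          mul_lt_mul_of_pos_left (ZMod.val_lt t) (pow_pos hp.pos _)
      _ = p ^ e := by rw [← pow_add]; congr 1; omega
  have e1 : ZMod (p ^ min e m) ≃ ((powMonoidHom (p ^ m) :
      Multiplicative (ZMod (p ^ e)) →* Multiplicative (ZMod (p ^ e))).ker) := by
    refine ⟨fun t => ⟨Multiplicative.ofAdd ((p ^ (e - min e m) * t.val : ℕ) : ZMod (p ^ e)), ?_⟩,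
      fun x => ((x.1.toAdd.val / p ^ (e - min e m) : ℕ) : ZMod (p ^ min e m)), ?_, ?_⟩
    · rw [hmem]
      simp only [toAdd_ofAdd]
      rw [ZMod.val_cast_of_lt (hcast t)]
      refine ⟨p ^ (m - min e m) * t.val, ?_⟩
      rw [← mul_assoc, ← mul_assoc, ← pow_add, ← pow_add]
      congr 2
      omega
    · intro t
      simp only [toAdd_ofAdd]
      rw [ZMod.val_cast_of_lt (hcast t)]
      rw [Nat.mul_div_cancel_left _ (pow_pos hp.pos _)]
      exact ZMod.natCast_rightInverse t
    · rintro ⟨x, hx⟩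
      rw [hmem] at hx
      have hdvd : p ^ (e - min e m) ∣ x.toAdd.val := by
        rcases le_or_gt m e with hme | hme
        · have hj : min e m = m := min_eq_right hme
          rw [hj]
          have : p ^ (e - m) * p ^ m ∣ x.toAdd.val * p ^ m := by
            rw [← pow_add, mul_comm (x.toAdd.val)]
            have he : e - m + m = e := by omega
            rw [he]
            exact hx
          exact (Nat.mul_dvd_mul_iff_right (pow_pos hp.pos m)).mp this
        · have hj : min e m = e := min_eq_left (le_of_lt hme)
          rw [hj]
          simp
      apply Subtype.ext
      simp only
      have hlt : x.toAdd.val / p ^ (e - min e m) < p ^ min e m := by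
        rw [Nat.div_lt_iff_lt_mul (pow_pos hp.pos _)]
        calc x.toAdd.val < p ^ e := ZMod.val_lt _
          _ = p ^ min e m * p ^ (e - min e m) := by rw [← pow_add]; congr 1; omega
      rw [ZMod.val_cast_of_lt hlt]
      rw [Nat.mul_div_cancel' hdvd]
      rw [ZMod.natCast_rightInverse x.toAdd]
      exact ofAdd_toAdd x
  rw [← Nat.card_congr e1, Nat.card_zmod]

lemma card_nested_range {W : Type*} [CommGroup W] (n q : ℕ) :
    Nat.card ((powMonoidHom q :
        ((powMonoidHom n : W →* W).range) →* ((powMonoidHom n : W →* W).range)).range) =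
      Nat.card ((powMonoidHom (n * q) : W →* W).range) := by
  apply Nat.card_congr
  refine ⟨fun u => ⟨u.1.1, ?_⟩, fun w => ?_, ?_, ?_⟩
  · obtain ⟨v, hv⟩ := u.2
    obtain ⟨y, hy⟩ := v.2
    refine ⟨y, ?_⟩
    rw [powMonoidHom_apply] at hy ⊢
    rw [pow_mul, hy]
    rw [powMonoidHom_apply] at hv
    exact congrArg Subtype.val hv
  · refine ⟨⟨w.1, ?_⟩, ?_⟩
    · obtain ⟨y, hy⟩ := w.2
      rw [powMonoidHom_apply] at hy
      exact ⟨y ^ q, by rw [powMonoidHom_apply, ← pow_mul, mul_comm q n, hy]⟩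
    · obtain ⟨y, hy⟩ := w.2
      rw [powMonoidHom_apply] at hy
      refine ⟨⟨y ^ n, ⟨y, rfl⟩⟩, ?_⟩
      rw [powMonoidHom_apply]
      apply Subtype.ext
      show (y ^ n) ^ q = w.1
      rw [← pow_mul, hy]
  · intro u
    apply Subtype.ext
    apply Subtype.ext
    rfl
  · intro w
    apply Subtype.ext
    rfl

lemma rank_ineq {X Y : Type*} [CommGroup X] [CommGroup Y] [Finite X] [Finite Y]
    (φ : X →* Y) (hφ : Surjective φ) (n q : ℕ) :
    Nat.card ((powMonoidHom n : Y →* Y).range) *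
        Nat.card ((powMonoidHom (n * q) : X →* X).range)
      ≤ Nat.card ((powMonoidHom n : X →* X).range) *
        Nat.card ((powMonoidHom (n * q) : Y →* Y).range) := by
  set S := (powMonoidHom n : X →* X).range with hS
  set T := (powMonoidHom n : Y →* Y).range with hT
  have hmem : ∀ x : X, x ∈ S → φ x ∈ T := by
    rintro _ ⟨y, rfl⟩
    exact ⟨φ y, by rw [powMonoidHom_apply, powMonoidHom_apply, map_pow]⟩
  let φ₁ : S →* T := (φ.comp S.subtype).codRestrict T (fun x => hmem x.1 x.2)
  have hφ₁ : Surjective φ₁ := by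
    rintro ⟨t, ht⟩
    obtain ⟨η, hη⟩ := ht
    obtain ⟨ξ, rfl⟩ := hφ η
    rw [powMonoidHom_apply] at hη
    refine ⟨⟨ξ ^ n, ⟨ξ, rfl⟩⟩, ?_⟩
    apply Subtype.ext
    show φ (ξ ^ n) = t
    rw [map_pow, hη]
  set Sq := (powMonoidHom q : S →* S).range with hSq
  set Tq := (powMonoidHom q : T →* T).range with hTq
  let ψ : S →* T ⧸ Tq := (QuotientGroup.mk' Tq).comp φ₁
  have hψ : Surjective ψ := (QuotientGroup.mk'_surjective Tq).comp hφ₁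
  have hker : ∀ x ∈ Sq, ψ x = 1 := by
    rintro _ ⟨u, rfl⟩
    rw [powMonoidHom_apply]
    show QuotientGroup.mk' Tq (φ₁ (u ^ q)) = 1
    rw [map_pow]
    have : φ₁ u ^ q ∈ Tq := ⟨φ₁ u, by rw [powMonoidHom_apply]⟩
    rwa [← MonoidHom.mem_ker, QuotientGroup.ker_mk'] 
  let χ : (S ⧸ Sq) →* (T ⧸ Tq) := QuotientGroup.lift Sq ψ hker
  have hχ : Surjective χ := by
    intro t
    obtain ⟨s, hs⟩ := hψ t
    exact ⟨QuotientGroup.mk s, hs⟩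
  have hle : Nat.card (T ⧸ Tq) ≤ Nat.card (S ⧸ Sq) :=
    Nat.card_le_card_of_surjective χ hχ
  have e1 : Nat.card T = Nat.card (T ⧸ Tq) * Nat.card Tq :=
    Subgroup.card_eq_card_quotient_mul_card_subgroup Tq
  have e2 : Nat.card S = Nat.card (S ⧸ Sq) * Nat.card Sq :=
    Subgroup.card_eq_card_quotient_mul_card_subgroup Sq
  have n1 : Nat.card Sq = Nat.card ((powMonoidHom (n * q) : X →* X).range) :=
    card_nested_range n q
  have n2 : Nat.card Tq = Nat.card ((powMonoidHom (n * q) : Y →* Y).range) :=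
    card_nested_range n q
  rw [← n1, ← n2, e1, e2]
  calc Nat.card (T ⧸ Tq) * Nat.card Tq * Nat.card Sq
      = (Nat.card Tq * Nat.card Sq) * Nat.card (T ⧸ Tq) := by ring
    _ ≤ (Nat.card Tq * Nat.card Sq) * Nat.card (S ⧸ Sq) :=
        Nat.mul_le_mul_left _ hle
    _ = Nat.card (S ⧸ Sq) * Nat.card Sq * Nat.card Tq := by ring

lemma card_range_pow_pi (hp : p.Prime) {ι : Type*} [Fintype ι] (e : ι → ℕ) (m : ℕ) :
    Nat.card ((powMonoidHom (p ^ m) :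
        (∀ i, Multiplicative (ZMod (p ^ e i))) →* (∀ i, Multiplicative (ZMod (p ^ e i)))).range) =
      ∏ i, p ^ (e i - m) := by
  haveI : ∀ i, NeZero (p ^ e i) := fun i => ⟨(pow_pos hp.pos _).ne'⟩
  have h1 := card_range_mul_card_ker (powMonoidHom (p ^ m) :
    (∀ i, Multiplicative (ZMod (p ^ e i))) →* (∀ i, Multiplicative (ZMod (p ^ e i))))
  rw [card_ker_pow_pi] at h1
  simp only [card_ker_pow_zmod hp] at h1
  have hX : Nat.card (∀ i, Multiplicative (ZMod (p ^ e i))) = ∏ i, p ^ e i := by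
    rw [Nat.card_pi]
    refine Finset.prod_congr rfl fun i _ => ?_
    rw [Nat.card_congr Multiplicative.toAdd, Nat.card_zmod]
  rw [hX] at h1
  have key : (∏ i, p ^ (e i - m)) * (∏ i, p ^ min (e i) m) = ∏ i, p ^ e i := by
    rw [← Finset.prod_mul_distrib]
    refine Finset.prod_congr rfl fun i _ => ?_
    rw [← pow_add]
    congr 1
    omega
  have hpos : 0 < ∏ i, p ^ min (e i) m :=
    Finset.prod_pos fun i _ => pow_pos hp.pos _
  exact Nat.eq_of_mul_eq_mul_right hpos (by rw [key, ← h1])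

lemma filter_count_le (hp : p.Prime) {r s : ℕ} (a : Fin r → ℕ) (b : Fin s → ℕ)
    (Ψ : (∀ j : Fin s, Multiplicative (ZMod (p ^ b j))) →*
      (∀ i : Fin r, Multiplicative (ZMod (p ^ a i)))) (hΨ : Surjective Ψ) (m : ℕ) :
    (Finset.univ.filter fun i : Fin r => m < a i).card ≤
      (Finset.univ.filter fun j : Fin s => m < b j).card := by
  haveI : ∀ j : Fin s, NeZero (p ^ b j) := fun j => ⟨(pow_pos hp.pos _).ne'⟩
  haveI : ∀ i : Fin r, NeZero (p ^ a i) := fun i => ⟨(pow_pos hp.pos _).ne'⟩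
  have h := rank_ineq Ψ hΨ (p ^ m) p
  rw [← pow_succ] at h
  rw [card_range_pow_pi hp a m, card_range_pow_pi hp b m,
    card_range_pow_pi hp a (m + 1), card_range_pow_pi hp b (m + 1)] at h
  rw [Finset.prod_pow_eq_pow_sum, Finset.prod_pow_eq_pow_sum,
    Finset.prod_pow_eq_pow_sum, Finset.prod_pow_eq_pow_sum, ← pow_add, ← pow_add] at h
  have h' := (Nat.pow_le_pow_iff_right hp.one_lt).mp h
  have idA : (∑ i, (a i - m)) =
      (∑ i, (a i - (m + 1))) + (Finset.univ.filter fun i : Fin r => m < a i).card := by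
    rw [Finset.card_filter, ← Finset.sum_add_distrib]
    refine Finset.sum_congr rfl fun i _ => ?_
    by_cases hcase : m < a i <;> simp [hcase] <;> omega
  have idB : (∑ j, (b j - m)) =
      (∑ j, (b j - (m + 1))) + (Finset.univ.filter fun j : Fin s => m < b j).card := by
    rw [Finset.card_filter, ← Finset.sum_add_distrib]
    refine Finset.sum_congr rfl fun j _ => ?_
    by_cases hcase : m < b j <;> simp [hcase] <;> omega
  omega

lemma pointwise_le (hp : p.Prime) {r s : ℕ} (a : Fin r → ℕ) (b : Fin s → ℕ)
    (ha_pos : ∀ i, 0 < a i)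
    (ha_anti : ∀ i j : Fin r, i ≤ j → a j ≤ a i)
    (hb_anti : ∀ i j : Fin s, i ≤ j → b j ≤ b i)
    (Ψ : (∀ j : Fin s, Multiplicative (ZMod (p ^ b j))) →*
      (∀ i : Fin r, Multiplicative (ZMod (p ^ a i)))) (hΨ : Surjective Ψ) :
    ∃ hrs : r ≤ s, ∀ i : Fin r, a i ≤ b (Fin.castLE hrs i) := by
  have hrs : r ≤ s := by
    have h := filter_count_le hp a b Ψ hΨ 0
    rw [Finset.filter_true_of_mem (fun i _ => ha_pos i)] at h
    calc r = (Finset.univ : Finset (Fin r)).card := by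
          rw [Finset.card_univ, Fintype.card_fin]
      _ ≤ (Finset.univ.filter fun j : Fin s => 0 < b j).card := h
      _ ≤ (Finset.univ : Finset (Fin s)).card := Finset.card_filter_le _ _
      _ = s := by rw [Finset.card_univ, Fintype.card_fin]
  refine ⟨hrs, fun i₀ => ?_⟩
  by_contra hcon
  push_neg at hcon
  set m := b (Fin.castLE hrs i₀) with hm
  have h := filter_count_le hp a b Ψ hΨ m
  have hlow : (Finset.Iic i₀).card ≤ (Finset.univ.filter fun i : Fin r => m < a i).card := by
    apply Finset.card_le_card
    intro i hi
    rw [Finset.mem_Iic] at hi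
    rw [Finset.mem_filter]
    exact ⟨Finset.mem_univ _, lt_of_lt_of_le hcon (ha_anti i i₀ hi)⟩
  have hup : (Finset.univ.filter fun j : Fin s => m < b j).card ≤
      (Finset.Iio (Fin.castLE hrs i₀)).card := by
    apply Finset.card_le_card
    intro j hj
    rw [Finset.mem_filter] at hj
    rw [Finset.mem_Iio]
    by_contra hle
    push_neg at hle
    exact absurd (hb_anti _ j hle) (not_le.mpr hj.2)
  rw [Fin.card_Iic] at hlow
  rw [Fin.card_Iio] at hup
  have : (i₀ : ℕ) + 1 ≤ ((Fin.castLE hrs i₀ : Fin s) : ℕ) := le_trans hlow (le_trans h hup)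
  simp [Fin.coe_castLE] at this

lemma exists_character {Q : Type*} [CommGroup Q] [Finite Q] {N : ℕ} (hNpos : 0 < N)
    (hN : ∀ x : Q, x ^ N = 1) {q : Q} (hq : q ≠ 1) :
    ∃ χ : Q →* Multiplicative (ZMod N), χ q ≠ 1 := by
  classical
  obtain ⟨ι, _, n, hn1, ⟨e⟩⟩ := CommGroup.equiv_prod_multiplicative_zmod_of_finite Q
  obtain ⟨i, hi⟩ : ∃ i, e q i ≠ 1 := by
    by_contra hall
    push_neg at hall
    have h1 : e q = 1 := funext hall
    exact hq ((MulEquiv.map_eq_one_iff e).mp h1)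
  haveI : NeZero (n i) := NeZero.of_gt (hn1 i)
  have hdvd : n i ∣ N := by
    have h1 : (e.symm ((Pi.mulSingle i (Multiplicative.ofAdd (1 : ZMod (n i)))) :
        (∀ j, Multiplicative (ZMod (n j))))) ^ N = 1 := hN _
    have h2 : ((Pi.mulSingle i (Multiplicative.ofAdd (1 : ZMod (n i)))) :
        (∀ j, Multiplicative (ZMod (n j)))) ^ N = 1 := by
      have h2' := congrArg e h1
      rw [map_pow, MulEquiv.apply_symm_apply] at h2'
      rw [h2']
      exact map_one e
    have h3 := congrFun h2 i
    rw [Pi.pow_apply, Pi.mulSingle_eq_same, Pi.one_apply] at h3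
    have h4 : (N : ZMod (n i)) = 0 := by
      have h4' := congrArg Multiplicative.toAdd h3
      simpa [toAdd_pow, nsmul_eq_mul] using h4'
    exact (ZMod.natCast_eq_zero_iff _ _).mp h4
  have hnipos : 0 < n i := lt_trans Nat.zero_lt_one (hn1 i)
  have hNni : (0 : ℕ) < N / n i := Nat.div_pos (Nat.le_of_dvd hNpos hdvd) hnipos
  set c0 : ZMod N := ((N / n i : ℕ) : ZMod N) with hc0
  have hfn : (zmultiplesHom (ZMod N) c0) ((n i : ℤ)) = 0 := by
    show ((n i : ℤ)) • c0 = 0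
    rw [natCast_zsmul, nsmul_eq_mul, hc0, ← Nat.cast_mul, Nat.mul_div_cancel' hdvd,
      ZMod.natCast_self]
  set ψ : ZMod (n i) →+ ZMod N := ZMod.lift (n i) ⟨zmultiplesHom (ZMod N) c0, hfn⟩ with hψ
  set t : ZMod (n i) := (e q i).toAdd with ht
  have htne : t ≠ 0 := by
    intro h0
    apply hi
    apply Multiplicative.toAdd.injective
    rw [toAdd_one]; exact h0
  have hψt : ψ t ≠ 0 := by
    have hteq : t = ((t.val : ℤ) : ZMod (n i)) := by
      rw [Int.cast_natCast, ZMod.natCast_rightInverse t]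
    rw [hteq, hψ, ZMod.lift_coe]
    show ((t.val : ℤ)) • c0 ≠ 0
    rw [natCast_zsmul, nsmul_eq_mul, hc0, ← Nat.cast_mul]
    rw [Ne, ZMod.natCast_eq_zero_iff]
    intro hdvd2
    have hlt : t.val * (N / n i) < N := by
      calc t.val * (N / n i) < n i * (N / n i) :=
            Nat.mul_lt_mul_of_lt_of_le (ZMod.val_lt t) (le_refl _) hNni
        _ = N := Nat.mul_div_cancel' hdvd
    have hpos : 0 < t.val * (N / n i) :=
      Nat.mul_pos (Nat.pos_of_ne_zero (fun h => htne ((ZMod.val_eq_zero t).mp h))) hNni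
    exact absurd (Nat.le_of_dvd hpos hdvd2) (not_le.mpr hlt)
  refine ⟨(AddMonoidHom.toMultiplicative ψ).comp
    ((Pi.evalMonoidHom (fun j => Multiplicative (ZMod (n j))) i).comp e.toMonoidHom), ?_⟩
  intro hcontra
  apply hψt
  have := congrArg Multiplicative.toAdd hcontra
  simpa using this

open scoped commutatorElement in
lemma exists_character_quotient {G : Type*} [Group G] [Finite G] (H' : Subgroup G)
    (hcomm : commutator G ≤ H') {N : ℕ} (hNpos : 0 < N)
    (hpow : ∀ g : G, g ^ N ∈ H') {z : G} (hz : z ∉ H') :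
    ∃ χ : G →* Multiplicative (ZMod N), (∀ h ∈ H', χ h = 1) ∧ χ z ≠ 1 := by
  haveI hnorm : H'.Normal := by
    constructor
    intro h hh g
    have hmem : ⁅g, h⁆ ∈ H' :=
      hcomm (Subgroup.commutator_mem_commutator (Subgroup.mem_top g) (Subgroup.mem_top h))
    have heq : g * h * g⁻¹ = ⁅g, h⁆ * h := by group
    rw [heq]
    exact Subgroup.mul_mem _ hmem hh
  letI : CommGroup (G ⧸ H') :=
    { (inferInstance : Group (G ⧸ H')) with
      mul_comm := by
        intro x y
        induction x using QuotientGroup.induction_on with | _ g1 =>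
        induction y using QuotientGroup.induction_on with | _ g2 =>
        show QuotientGroup.mk (g1 * g2) = QuotientGroup.mk (g2 * g1)
        rw [QuotientGroup.eq]
        have heq : (g1 * g2)⁻¹ * (g2 * g1) = ⁅g2⁻¹, g1⁻¹⁆ := by group
        rw [heq]
        exact hcomm (Subgroup.commutator_mem_commutator (Subgroup.mem_top _) (Subgroup.mem_top _)) }
  have hexp : ∀ x : G ⧸ H', x ^ N = 1 := by
    intro x
    induction x using QuotientGroup.induction_on with | _ g =>
    show (QuotientGroup.mk' H' g) ^ N = 1
    rw [← map_pow, QuotientGroup.mk'_apply, QuotientGroup.eq_one_iff]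
    exact hpow g
  have hzne : (QuotientGroup.mk z : G ⧸ H') ≠ 1 := by
    rw [Ne, QuotientGroup.eq_one_iff]
    exact hz
  obtain ⟨χ', hχ'⟩ := exists_character hNpos hexp hzne
  refine ⟨χ'.comp (QuotientGroup.mk' H'), fun h hh => ?_, hχ'⟩
  have : QuotientGroup.mk' H' h = 1 := by
    rw [QuotientGroup.mk'_apply, QuotientGroup.eq_one_iff]
    exact hh
  show χ' (QuotientGroup.mk' H' h) = 1
  rw [this, map_one]

lemma exists_moving_aut {p : ℕ} (hp : p.Prime) {G : Type*} [Group G] [Finite G]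
    {w z : G} (n : ℕ) (hw : w ∈ Subgroup.center G) (hz : z ∈ Subgroup.center G)
    (horder : orderOf w = p ^ n)
    (χ : G →* Multiplicative (ZMod (p ^ n)))
    (hunit : ¬ (p ∣ 1 + (χ w).toAdd.val))
    (hχz : χ z ≠ 1) :
    ∃ α : MulAut G, (∀ x : G, x⁻¹ * α x ∈ Subgroup.center G) ∧ α z ≠ z := by
  haveI : NeZero (p ^ n) := ⟨(pow_pos hp.pos _).ne'⟩
  have hcomm : ∀ (m : ℕ) (y : G), w ^ m * y = y * w ^ m := fun m y =>
    (Subgroup.mem_center_iff.mp ((Subgroup.center G).pow_mem hw m) y).symm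
  have hpowmod : ∀ m : ℕ, w ^ (m % p ^ n) = w ^ m := by
    intro m
    conv_rhs => rw [← pow_mod_orderOf]
    rw [horder]
  have hmul : ∀ x y : G, (fun x => x * w ^ (χ x).toAdd.val) (x * y) =
      ((fun x => x * w ^ (χ x).toAdd.val) x) * ((fun x => x * w ^ (χ x).toAdd.val) y) := by
    intro x y
    simp only
    rw [map_mul, toAdd_mul, ZMod.val_add, hpowmod, pow_add]
    calc x * y * (w ^ (χ x).toAdd.val * w ^ (χ y).toAdd.val)
        = x * (y * w ^ (χ x).toAdd.val) * w ^ (χ y).toAdd.val := by group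
      _ = x * (w ^ (χ x).toAdd.val * y) * w ^ (χ y).toAdd.val := by rw [hcomm]
      _ = x * w ^ (χ x).toAdd.val * (y * w ^ (χ y).toAdd.val) := by group
  set σ : G →* G := MonoidHom.mk' (fun x => x * w ^ (χ x).toAdd.val) hmul with hσ
  have hinj : Function.Injective σ := by
    rw [injective_iff_map_eq_one]
    intro x hx1
    set ξ := (χ x).toAdd with hξdef
    have hx1' : x * w ^ ξ.val = 1 := hx1
    have hxw : x = (w ^ ξ.val)⁻¹ := mul_eq_one_iff_eq_inv.mp hx1'
    have hχx : χ x = (χ w ^ ξ.val)⁻¹ := by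
      conv_lhs => rw [hxw]
      rw [map_inv, map_pow]
    have hadd : ξ = -(ξ.val • (χ w).toAdd) := by
      have h2 := congrArg Multiplicative.toAdd hχx
      rw [toAdd_inv, toAdd_pow] at h2
      rw [hξdef]
      exact h2
    have heq0 : ξ * (1 + (χ w).toAdd) = 0 := by
      rw [nsmul_eq_mul, ZMod.natCast_val, ZMod.cast_id] at hadd
      linear_combination hadd
    have hu : IsUnit (1 + (χ w).toAdd) := by
      have hrw : (1 + (χ w).toAdd) = ((1 + (χ w).toAdd.val : ℕ) : ZMod (p ^ n)) := by
        push_cast [ZMod.natCast_val, ZMod.cast_id]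
        ring
      rw [hrw, ZMod.isUnit_iff_coprime]
      apply Nat.Coprime.pow_right
      rw [Nat.coprime_comm]
      exact (Nat.Prime.coprime_iff_not_dvd hp).mpr hunit
    have hξ0 : ξ = 0 := by
      rcases hu with ⟨u, hu'⟩
      have := congrArg (fun t => t * ((u⁻¹ : (ZMod (p ^ n))ˣ) : ZMod (p ^ n))) heq0
      simp only [zero_mul] at this
      rwa [← hu', mul_assoc, Units.mul_inv, mul_one] at this
    have hv0 : ξ.val = 0 := by rw [hξ0, ZMod.val_zero]
    rw [hv0, pow_zero, mul_one] at hx1'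
    exact hx1'
  refine ⟨MulEquiv.ofBijective σ (Finite.injective_iff_bijective.mp hinj), ?_, ?_⟩
  · intro x
    show x⁻¹ * σ x ∈ Subgroup.center G
    have : x⁻¹ * σ x = w ^ (χ x).toAdd.val := by
      show x⁻¹ * (x * w ^ (χ x).toAdd.val) = _
      group
    rw [this]
    exact (Subgroup.center G).pow_mem hw _
  · show σ z ≠ z
    intro heq
    have hw1 : w ^ (χ z).toAdd.val = 1 := by
      have : z * w ^ (χ z).toAdd.val = z := heq
      rwa [mul_eq_left] at this
    have hdvd : p ^ n ∣ (χ z).toAdd.val := by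
      have hd := orderOf_dvd_of_pow_eq_one hw1
      rwa [horder] at hd
    have hne : (χ z).toAdd.val ≠ 0 := by
      intro h0
      apply hχz
      apply Multiplicative.toAdd.injective
      simpa using (ZMod.val_eq_zero _).mp h0
    have := Nat.le_of_dvd (Nat.pos_of_ne_zero hne) hdvd
    exact absurd (ZMod.val_lt (χ z).toAdd) (not_lt.mpr this)

lemma comb_iff {p : ℕ} (hp1 : 1 < p) {r s k c : ℕ} (a : Fin r → ℕ) (b : Fin s → ℕ)
    (hc1 : 1 ≤ c)
    (hb_pos : ∀ j, 0 < b j)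
    (ha_anti : ∀ i j : Fin r, i ≤ j → a j ≤ a i)
    (hk : ∀ i : Fin r, (i : ℕ) < k → a i = c)
    (hk_max : ∀ hi : k < r, a ⟨k, hi⟩ ≠ c)
    (hac : ∀ i, a i ≤ c)
    (hrs : r ≤ s)
    (hab : ∀ i : Fin r, a i ≤ b (Fin.castLE hrs i)) :
    ((∑ i, a i) = ∑ j, min (b j) c) ↔
      (r = s ∧ Nonempty
        ((∀ i : {i : Fin r // k ≤ (i : ℕ)}, Multiplicative (ZMod (p ^ a i.1))) ≃*
          (∀ i : {i : Fin s // k ≤ (i : ℕ)}, Multiplicative (ZMod (p ^ b i.1))))) := by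
  haveI : ∀ i : Fin r, NeZero (p ^ a i) := fun i => ⟨(pow_pos (lt_trans one_pos hp1) _).ne'⟩
  haveI : ∀ j : Fin s, NeZero (p ^ b j) := fun j => ⟨(pow_pos (lt_trans one_pos hp1) _).ne'⟩
  constructor
  · intro hsum
    have h1 : ∀ i : Fin r, a i ≤ min (b (Fin.castLE hrs i)) c := fun i =>
      le_min (hab i) (hac i)
    have hemb : (∑ i : Fin r, min (b (Fin.castLE hrs i)) c) =
        ∑ j ∈ Finset.univ.map (Fin.castLEEmb hrs), min (b j) c := by
      rw [Finset.sum_map]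
      rfl
    have hchain1 : (∑ i : Fin r, a i) ≤ ∑ i : Fin r, min (b (Fin.castLE hrs i)) c :=
      Finset.sum_le_sum fun i _ => h1 i
    have hchain2 : (∑ j ∈ Finset.univ.map (Fin.castLEEmb hrs), min (b j) c) ≤
        ∑ j : Fin s, min (b j) c :=
      Finset.sum_le_sum_of_subset (Finset.subset_univ _)
    have hr : r = s := by
      by_contra hne
      have hlt : r < s := lt_of_le_of_ne hrs hne
      have hj0 : (⟨r, hlt⟩ : Fin s) ∉ Finset.univ.map (Fin.castLEEmb hrs) := by
        rw [Finset.mem_map]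
        rintro ⟨i, -, hi⟩
        have : (i : ℕ) = r := congrArg Fin.val hi
        omega
      have hstrict : (∑ j ∈ Finset.univ.map (Fin.castLEEmb hrs), min (b j) c) <
          ∑ j : Fin s, min (b j) c :=
        Finset.sum_lt_sum_of_subset (Finset.subset_univ _) (Finset.mem_univ _) hj0
          (lt_of_lt_of_le one_pos (le_min (hb_pos _) hc1))
          (fun j _ _ => Nat.zero_le _)
      omega
    subst hr
    have hid : ∀ i : Fin r, Fin.castLE hrs i = i := fun i => Fin.ext rfl
    have hle' : ∀ i ∈ Finset.univ, a i ≤ min (b i) c := by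
      intro i _
      have := h1 i
      rwa [hid] at this
    have hsum' : (∑ i : Fin r, a i) = ∑ i : Fin r, min (b i) c := hsum
    have hpt : ∀ i : Fin r, a i = min (b i) c := by
      intro i
      exact (Finset.sum_eq_sum_iff_of_le hle').mp hsum' i (Finset.mem_univ i)
    have htail : ∀ i : Fin r, k ≤ (i : ℕ) → a i = b i := by
      intro i hki
      have hkrlt : k < r := lt_of_le_of_lt hki i.2
      have hak : a ⟨k, hkrlt⟩ < c := lt_of_le_of_ne (hac _) (hk_max hkrlt)
      have hai : a i < c := lt_of_le_of_lt (ha_anti ⟨k, hkrlt⟩ i hki) hak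
      have := hpt i
      omega
    exact ⟨rfl, ⟨MulEquiv.piCongrRight fun i => by
      rw [htail i.1 i.2]⟩⟩
  · rintro ⟨hr, ⟨e⟩⟩
    subst hr
    have hid : ∀ i : Fin r, Fin.castLE hrs i = i := fun i => Fin.ext rfl
    have hcard := Nat.card_congr e.toEquiv
    rw [Nat.card_pi, Nat.card_pi] at hcard
    have hfa : ∀ i : {i : Fin r // k ≤ (i : ℕ)},
        Nat.card (Multiplicative (ZMod (p ^ a i.1))) = p ^ a i.1 := fun i => by
      rw [Nat.card_congr Multiplicative.toAdd, Nat.card_zmod]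
    have hfb : ∀ i : {i : Fin r // k ≤ (i : ℕ)},
        Nat.card (Multiplicative (ZMod (p ^ b i.1))) = p ^ b i.1 := fun i => by
      rw [Nat.card_congr Multiplicative.toAdd, Nat.card_zmod]
    rw [Finset.prod_congr rfl (fun i _ => hfa i), Finset.prod_congr rfl (fun i _ => hfb i),
      Finset.prod_pow_eq_pow_sum, Finset.prod_pow_eq_pow_sum] at hcard
    have hsums : (∑ i : {i : Fin r // k ≤ (i : ℕ)}, a i.1) =
        ∑ i : {i : Fin r // k ≤ (i : ℕ)}, b i.1 :=
      Nat.pow_right_injective hp1 hcard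
    have hsubA : (∑ i ∈ Finset.univ.filter (fun i : Fin r => k ≤ (i : ℕ)), a i) =
        ∑ i : {i : Fin r // k ≤ (i : ℕ)}, a i.1 :=
      Finset.sum_subtype _ (fun x => by simp) a
    have hsubB : (∑ i ∈ Finset.univ.filter (fun i : Fin r => k ≤ (i : ℕ)), b i) =
        ∑ i : {i : Fin r // k ≤ (i : ℕ)}, b i.1 :=
      Finset.sum_subtype _ (fun x => by simp) b
    have htailsum : (∑ i ∈ Finset.univ.filter (fun i : Fin r => k ≤ (i : ℕ)), a i) =
        ∑ i ∈ Finset.univ.filter (fun i : Fin r => k ≤ (i : ℕ)), b i := by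
      rw [hsubA, hsubB, hsums]
    apply le_antisymm
    · apply Finset.sum_le_sum
      intro i _
      have h1 := hab i
      rw [hid] at h1
      have h2 := hac i
      omega
    · have hsplitm := Finset.sum_filter_add_sum_filter_not Finset.univ
        (fun j : Fin r => (j : ℕ) < k) (fun j => min (b j) c)
      have hsplita := Finset.sum_filter_add_sum_filter_not Finset.univ
        (fun j : Fin r => (j : ℕ) < k) a
      have hb1 : (∑ j ∈ Finset.univ.filter (fun j : Fin r => (j : ℕ) < k), min (b j) c) ≤
          ∑ j ∈ Finset.univ.filter (fun j : Fin r => (j : ℕ) < k), a j := by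
        apply Finset.sum_le_sum
        intro j hj
        rw [Finset.mem_filter] at hj
        rw [hk j hj.2]
        exact min_le_right _ _
      have hb2 : (∑ j ∈ Finset.univ.filter (fun j : Fin r => ¬ (j : ℕ) < k), min (b j) c) ≤
          ∑ j ∈ Finset.univ.filter (fun j : Fin r => ¬ (j : ℕ) < k), a j := by
        have hfilt : Finset.univ.filter (fun j : Fin r => ¬ (j : ℕ) < k) =
            Finset.univ.filter (fun j : Fin r => k ≤ (j : ℕ)) := by
          apply Finset.filter_congr
          intro j _
          simp [not_lt]
        rw [hfilt]
        calc (∑ j ∈ Finset.univ.filter (fun j : Fin r => k ≤ (j : ℕ)), min (b j) c)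
            ≤ ∑ j ∈ Finset.univ.filter (fun j : Fin r => k ≤ (j : ℕ)), b j :=
              Finset.sum_le_sum fun j _ => min_le_left _ _
          _ = ∑ j ∈ Finset.univ.filter (fun j : Fin r => k ≤ (j : ℕ)), a j := htailsum.symm
      omega

end Toolkit

section Main

set_option maxHeartbeats 1000000 in
theorem stmt16 {p : ℕ} [Fact p.Prime] {G : Type*} [Group G] [Finite G]
    (hp : IsPGroup p G)
    (h2 : commutator G ≤ Subgroup.center G) (hna : commutator G ≠ ⊥)
    {r s : ℕ} (a : Fin r → ℕ) (b : Fin s → ℕ)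
    (ha_pos : ∀ i, 0 < a i) (hb_pos : ∀ i, 0 < b i)
    (ha_anti : ∀ i j : Fin r, i ≤ j → a j ≤ a i)
    (hb_anti : ∀ i j : Fin s, i ≤ j → b j ≤ b i)
    (eZ : (G ⧸ Subgroup.center G) ≃* ∀ i : Fin r, Multiplicative (ZMod (p ^ a i)))
    (eγ : (G ⧸ commutator G) ≃* ∀ i : Fin s, Multiplicative (ZMod (p ^ b i)))
    (c : ℕ)
    (hc : Monoid.exponent (G ⧸ Subgroup.center G) = p ^ c)
    (hcγ : Monoid.exponent ↥(commutator G) = p ^ c)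
    (k : ℕ) (hkr : k ≤ r) (hks : k ≤ s)
    (hk : ∀ i : Fin r, (i : ℕ) < k → a i = c)
    (hk_max : ∀ hi : k < r, a ⟨k, hi⟩ ≠ c) :
    (∀ α : MulAut G, (∀ x : G, x⁻¹ * α x ∈ Subgroup.center G) →
        ∀ z ∈ Subgroup.center G, α z = z) ↔
      (r = s ∧
        Nonempty
          ((∀ i : {i : Fin r // k ≤ (i : ℕ)}, Multiplicative (ZMod (p ^ a i.1))) ≃*
            (∀ i : {i : Fin s // k ≤ (i : ℕ)}, Multiplicative (ZMod (p ^ b i.1)))) ∧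
        Monoid.exponent ↥(Subgroup.center G) = Monoid.exponent ↥(commutator G)) := by
  classical
  have hpp : p.Prime := Fact.out
  -- basic positivity
  have hc1 : 1 ≤ c := by
    by_contra h0
    push_neg at h0
    have hc0 : c = 0 := by omega
    apply hna
    rw [Subgroup.eq_bot_iff_forall]
    intro x hx
    have h1 := Subgroup.pow_exponent_eq_one (H := commutator G) hx
    rwa [hcγ, hc0, pow_zero, pow_one] at h1
  -- powers are central
  have hxZ : ∀ g : G, g ^ p ^ c ∈ Subgroup.center G := by
    intro g
    have h1 : (QuotientGroup.mk g : G ⧸ Subgroup.center G) ^ p ^ c = 1 := by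
      rw [← hc]
      exact Monoid.pow_exponent_eq_one _
    rwa [← QuotientGroup.mk_pow, QuotientGroup.eq_one_iff] at h1
  -- the subgroup H
  set H : Subgroup G := Subgroup.closure
    ((Set.range fun g : G => g ^ p ^ c) ∪ (commutator G : Set G)) with hHdef
  have hKH : commutator G ≤ H := fun x hx => Subgroup.subset_closure (Or.inr hx)
  have hpowH : ∀ g : G, g ^ p ^ c ∈ H := fun g => Subgroup.subset_closure (Or.inl ⟨g, rfl⟩)
  have hHZ : H ≤ Subgroup.center G := by
    rw [hHdef, Subgroup.closure_le]
    rintro x hx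
    rcases hx with ⟨g, rfl⟩ | hx
    · exact hxZ g
    · exact h2 hx
  -- exponent of the center is a p-power p ^ d with c ≤ d
  have hZpg : IsPGroup p (Subgroup.center G) := hp.to_subgroup _
  obtain ⟨nZ, hnZ⟩ := IsPGroup.iff_card.mp hZpg
  have hexpZdvd : Monoid.exponent (Subgroup.center G) ∣ p ^ nZ := by
    rw [← hnZ]; exact Group.exponent_dvd_nat_card
  obtain ⟨d, hdle, hd⟩ := (Nat.dvd_prime_pow hpp).mp hexpZdvd
  have hKdvd : (p : ℕ) ^ c ∣ p ^ d := by
    rw [← hcγ, ← hd]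
    apply Monoid.exponent_dvd_of_forall_pow_eq_one
    intro κ
    have h1 : (κ : G) ^ Monoid.exponent (Subgroup.center G) = 1 :=
      Subgroup.pow_exponent_eq_one (h2 κ.2)
    exact Subtype.ext (by rw [SubgroupClass.coe_pow]; exact h1)
  have hcd : c ≤ d := (Nat.pow_dvd_pow_iff_le_right hpp.one_lt).mp hKdvd
  ----------------------------------------------------------------
  -- Part I/II : the fixing property is equivalent to P
  ----------------------------------------------------------------
  have hmain : (∀ α : MulAut G, (∀ x : G, x⁻¹ * α x ∈ Subgroup.center G) →
        ∀ z ∈ Subgroup.center G, α z = z) ↔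
      (Monoid.exponent (Subgroup.center G) = p ^ c ∧ Subgroup.center G ≤ H) := by
    constructor
    · intro hfix
      have hP2 : Subgroup.center G ≤ H := by
        by_contra hno
        rw [SetLike.not_le_iff_exists] at hno
        obtain ⟨z, hzZ, hzH⟩ := hno
        letI : CommGroup ↥(commutator G) :=
          { (inferInstance : Group ↥(commutator G)) with
            mul_comm := fun x y => Subtype.ext (Subgroup.mem_center_iff.mp (h2 y.2) x) }
        have hEE : Monoid.ExponentExists ↥(commutator G) := Monoid.ExponentExists.of_finite
        obtain ⟨w₀, hw₀⟩ := Monoid.exists_orderOf_eq_exponent hEE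
        have hwK : (w₀ : G) ∈ commutator G := w₀.2
        have hworder : orderOf (w₀ : G) = p ^ c := by
          rw [Subgroup.orderOf_coe, hw₀]
          exact hcγ
        obtain ⟨χ, hχH, hχz⟩ := exists_character_quotient H hKH
          (pow_pos hpp.pos c) hpowH hzH
        have hχw : χ (w₀ : G) = 1 := hχH _ (hKH hwK)
        have hunit : ¬ (p ∣ 1 + (χ (w₀ : G)).toAdd.val) := by
          rw [hχw]
          simp only [toAdd_one, ZMod.val_zero]
          exact hpp.not_dvd_one
        obtain ⟨α, hα, hαz⟩ := exists_moving_aut hpp c (h2 hwK) hzZ hworder χ hunit hχz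
        exact hαz (hfix α hα z hzZ)
      have hP1 : Monoid.exponent (Subgroup.center G) = p ^ c := by
        rw [hd]
        by_contra hdc'
        have hdc : c ≠ d := fun h => hdc' (by rw [h])
        have hlt : c < d := lt_of_le_of_ne hcd hdc
        -- find a power generator of maximal order
        have hgen : ∃ u : G, ((u ^ p ^ c) ^ p ^ (d - 1)) ≠ 1 := by
          by_contra hall
          push_neg at hall
          have hHpow : ∀ h ∈ H, h ^ p ^ (d - 1) = 1 ∧ h ∈ Subgroup.center G := by
            intro h hh
            rw [hHdef] at hh
            refine Subgroup.closure_induction ?_ ?_ ?_ ?_ hh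
            · rintro x hx
              rcases hx with ⟨g, rfl⟩ | hx
              · exact ⟨hall g, hxZ g⟩
              · constructor
                · have h1 : x ^ p ^ c = 1 := by
                    have := Subgroup.pow_exponent_eq_one (H := commutator G) hx
                    rwa [hcγ] at this
                  have h3 : p ^ (d - 1) = p ^ c * p ^ (d - 1 - c) := by
                    rw [← pow_add]; congr 1; omega
                  rw [h3, pow_mul, h1, one_pow]
                · exact h2 hx
            · exact ⟨one_pow _, Subgroup.one_mem _⟩
            · rintro x y hx hy ⟨hx1, hx2⟩ ⟨hy1, hy2⟩
              refine ⟨?_, Subgroup.mul_mem _ hx2 hy2⟩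
              have hcomm : Commute x y := Subgroup.mem_center_iff.mp hx2 y |>.symm
              rw [hcomm.mul_pow, hx1, hy1, one_mul]
            · rintro x hx ⟨hx1, hx2⟩
              exact ⟨by rw [inv_pow, hx1, inv_one], Subgroup.inv_mem _ hx2⟩
          have hdvd : Monoid.exponent (Subgroup.center G) ∣ p ^ (d - 1) := by
            apply Monoid.exponent_dvd_of_forall_pow_eq_one
            intro ζ
            have h1 := (hHpow (ζ : G) (hP2 ζ.2)).1
            exact Subtype.ext (by rw [SubgroupClass.coe_pow]; exact h1)
          rw [hd] at hdvd
          have := (Nat.pow_dvd_pow_iff_le_right hpp.one_lt).mp hdvd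
          omega
        obtain ⟨u, hu⟩ := hgen
        have hwZ : u ^ p ^ c ∈ Subgroup.center G := hxZ u
        have hworder : orderOf (u ^ p ^ c) = p ^ d := by
          have hdvd : orderOf (u ^ p ^ c) ∣ p ^ d := by
            apply orderOf_dvd_of_pow_eq_one
            have := Subgroup.pow_exponent_eq_one (H := Subgroup.center G) hwZ
            rwa [hd] at this
          obtain ⟨t, htle, hteq⟩ := (Nat.dvd_prime_pow hpp).mp hdvd
          have htd : t = d := by
            by_contra hne
            have ht1 : t ≤ d - 1 := by omega
            apply hu
            have h1 : (u ^ p ^ c) ^ orderOf (u ^ p ^ c) = 1 := pow_orderOf_eq_one _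
            rw [hteq] at h1
            have h3 : p ^ (d - 1) = p ^ t * p ^ (d - 1 - t) := by
              rw [← pow_add]; congr 1; omega
            rw [h3, pow_mul, h1, one_pow]
          rw [hteq, htd]
        set Hd : Subgroup G := Subgroup.closure
          ((Set.range fun g : G => g ^ p ^ d) ∪ (commutator G : Set G)) with hHddef
        have hKHd : commutator G ≤ Hd := fun x hx => Subgroup.subset_closure (Or.inr hx)
        have hpowHd : ∀ g : G, g ^ p ^ d ∈ Hd := fun g => Subgroup.subset_closure (Or.inl ⟨g, rfl⟩)
        have hHdexp : ∀ h ∈ Hd, h ^ p ^ c = 1 ∧ h ∈ Subgroup.center G := by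
          intro h hh
          rw [hHddef] at hh
          refine Subgroup.closure_induction ?_ ?_ ?_ ?_ hh
          · rintro x hx
            rcases hx with ⟨g, rfl⟩ | hx
            · constructor
              · have h1 : (g ^ p ^ c) ^ p ^ d = 1 := by
                  have := Subgroup.pow_exponent_eq_one (H := Subgroup.center G) (hxZ g)
                  rwa [hd] at this
                calc (g ^ p ^ d) ^ p ^ c = g ^ (p ^ d * p ^ c) := by rw [pow_mul]
                  _ = (g ^ p ^ c) ^ p ^ d := by rw [← pow_mul, mul_comm]
                  _ = 1 := h1
              · have heq : g ^ p ^ d = (g ^ p ^ c) ^ p ^ (d - c) := by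
                  have hcd' : c + (d - c) = d := by omega
                  rw [← pow_mul, ← pow_add, hcd']
                show g ^ p ^ d ∈ Subgroup.center G
                rw [heq]
                exact Subgroup.pow_mem _ (hxZ g) _
            · constructor
              · have := Subgroup.pow_exponent_eq_one (H := commutator G) hx
                rwa [hcγ] at this
              · exact h2 hx
          · exact ⟨one_pow _, Subgroup.one_mem _⟩
          · rintro x y hx hy ⟨hx1, hx2⟩ ⟨hy1, hy2⟩
            refine ⟨?_, Subgroup.mul_mem _ hx2 hy2⟩
            have hcomm : Commute x y := Subgroup.mem_center_iff.mp hx2 y |>.symm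
            rw [hcomm.mul_pow, hx1, hy1, one_mul]
          · rintro x hx ⟨hx1, hx2⟩
            exact ⟨by rw [inv_pow, hx1, inv_one], Subgroup.inv_mem _ hx2⟩
        have hwHd : u ^ p ^ c ∉ Hd := by
          intro hmem
          have h1 := (hHdexp _ hmem).1
          have h3 := orderOf_dvd_of_pow_eq_one h1
          rw [hworder] at h3
          have := (Nat.pow_dvd_pow_iff_le_right hpp.one_lt).mp h3
          omega
        obtain ⟨χ, hχHd, hχw⟩ := exists_character_quotient Hd hKHd
          (pow_pos hpp.pos d) hpowHd hwHd
        haveI : NeZero (p ^ d) := ⟨(pow_pos hpp.pos d).ne'⟩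
        have hpdvd : p ∣ (χ (u ^ p ^ c)).toAdd.val := by
          have h1 : χ (u ^ p ^ c) = (χ u) ^ p ^ c := by rw [map_pow]
          have h2' : (χ (u ^ p ^ c)).toAdd = (p ^ c) • (χ u).toAdd := by
            rw [h1, toAdd_pow]
          have h3 : (p ^ c) • (χ u).toAdd =
              ((p ^ c * (χ u).toAdd.val : ℕ) : ZMod (p ^ d)) := by
            rw [nsmul_eq_mul, Nat.cast_mul, ZMod.natCast_val, ZMod.cast_id]
          rw [h2', h3, ZMod.val_natCast]
          rw [Nat.dvd_mod_iff (dvd_pow_self p (by omega : d ≠ 0))]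
          exact Dvd.dvd.mul_right (dvd_pow_self p (by omega : c ≠ 0)) _
        have hunit : ¬ (p ∣ 1 + (χ (u ^ p ^ c)).toAdd.val) := by
          intro hcon
          have hone : p ∣ 1 := by
            have := Nat.dvd_sub hcon hpdvd
            simpa using this
          exact hpp.not_dvd_one hone
        obtain ⟨α, hα, hαz⟩ := exists_moving_aut hpp d hwZ hwZ hworder χ hunit hχw
        exact hαz (hfix α hα _ hwZ)
      exact ⟨hP1, hP2⟩
    · rintro ⟨hP1, hP2⟩
      intro α hα z hz
      have hmul : ∀ x y : G,
          (fun g : G => (⟨g⁻¹ * α g, hα g⟩ : Subgroup.center G)) (x * y) =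
            ((fun g : G => (⟨g⁻¹ * α g, hα g⟩ : Subgroup.center G)) x) *
              ((fun g : G => (⟨g⁻¹ * α g, hα g⟩ : Subgroup.center G)) y) := by
        intro x y
        apply Subtype.ext
        show (x * y)⁻¹ * α (x * y) = (x⁻¹ * α x) * (y⁻¹ * α y)
        have hcen := Subgroup.mem_center_iff.mp (hα x) y⁻¹
        calc (x * y)⁻¹ * α (x * y) = y⁻¹ * ((x⁻¹ * α x) * α y) := by
              rw [map_mul]; group
          _ = (y⁻¹ * (x⁻¹ * α x)) * α y := by group
          _ = ((x⁻¹ * α x) * y⁻¹) * α y := by rw [hcen]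
          _ = (x⁻¹ * α x) * (y⁻¹ * α y) := by group
      set f : G →* Subgroup.center G :=
        MonoidHom.mk' (fun g : G => (⟨g⁻¹ * α g, hα g⟩ : Subgroup.center G)) hmul with hfdef
      have hker : H ≤ f.ker := by
        rw [hHdef, Subgroup.closure_le]
        rintro x hx
        rcases hx with ⟨g, rfl⟩ | hx
        · have : f (g ^ p ^ c) = 1 := by
            rw [map_pow, ← hP1]
            exact Monoid.pow_exponent_eq_one (f g)
          exact this
        · letI : CommGroup ↥(Subgroup.center G) :=
            { (inferInstance : Group ↥(Subgroup.center G)) with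
              mul_comm := fun x y => Subtype.ext (Subgroup.mem_center_iff.mp y.2 x) }
          exact Abelianization.commutator_subset_ker (A := ↥(Subgroup.center G)) f hx
      have hfz : f z = 1 := hker (hP2 hz)
      have h1 : z⁻¹ * α z = 1 := congrArg Subtype.val hfz
      rw [← inv_mul_cancel z] at h1
      exact mul_left_cancel h1

  ----------------------------------------------------------------
  -- Part III : numeric characterization
  ----------------------------------------------------------------
  haveI : Finite (∀ j : Fin s, Multiplicative (ZMod (p ^ b j))) :=
    Finite.of_equiv _ eγ.toEquiv
  haveI : Finite (∀ i : Fin r, Multiplicative (ZMod (p ^ a i))) :=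
    Finite.of_equiv _ eZ.toEquiv
  set Φ : G →* (∀ j : Fin s, Multiplicative (ZMod (p ^ b j))) :=
    eγ.toMonoidHom.comp (QuotientGroup.mk' (commutator G)) with hΦdef
  have hΦs : Function.Surjective Φ :=
    eγ.surjective.comp (QuotientGroup.mk'_surjective _)
  have hkerΦ : Φ.ker = commutator G := by
    ext g
    rw [MonoidHom.mem_ker]
    show eγ (QuotientGroup.mk' (commutator G) g) = 1 ↔ _
    rw [MulEquiv.map_eq_one_iff, QuotientGroup.mk'_apply, QuotientGroup.eq_one_iff]
  set q0 : (G ⧸ commutator G) →* (G ⧸ Subgroup.center G) :=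
    QuotientGroup.map _ _ (MonoidHom.id G) (fun x hx => h2 hx) with hq0def
  set Ψ : (∀ j : Fin s, Multiplicative (ZMod (p ^ b j))) →*
      (∀ i : Fin r, Multiplicative (ZMod (p ^ a i))) :=
    eZ.toMonoidHom.comp (q0.comp eγ.symm.toMonoidHom) with hΨdef
  have hΨΦ : ∀ g : G, Ψ (Φ g) = eZ (QuotientGroup.mk g) := by
    intro g
    show eZ (q0 (eγ.symm (eγ (QuotientGroup.mk' (commutator G) g)))) = _
    rw [MulEquiv.symm_apply_apply]
    rfl
  have hΨs : Function.Surjective Ψ := by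
    intro y
    obtain ⟨x, hx⟩ := QuotientGroup.mk'_surjective (Subgroup.center G) (eZ.symm y)
    refine ⟨Φ x, ?_⟩
    rw [hΨΦ, show (QuotientGroup.mk x : G ⧸ Subgroup.center G) = eZ.symm y from hx,
      MulEquiv.apply_symm_apply]
  have hmapH : Subgroup.map Φ H = (powMonoidHom (p ^ c) :
      (∀ j : Fin s, Multiplicative (ZMod (p ^ b j))) →*
        (∀ j : Fin s, Multiplicative (ZMod (p ^ b j)))).range := by
    rw [hHdef, MonoidHom.map_closure]
    have himg : Φ '' ((Set.range fun g : G => g ^ p ^ c) ∪ (commutator G : Set G)) =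
        (Set.range fun x : (∀ j : Fin s, Multiplicative (ZMod (p ^ b j))) => x ^ p ^ c)
          ∪ {1} := by
      rw [Set.image_union]
      congr 1
      · ext y
        constructor
        · rintro ⟨-, ⟨g, rfl⟩, rfl⟩
          exact ⟨Φ g, (map_pow Φ g _).symm⟩
        · rintro ⟨x, rfl⟩
          obtain ⟨g, rfl⟩ := hΦs x
          exact ⟨g ^ p ^ c, ⟨g, rfl⟩, map_pow Φ g _⟩
      · apply Set.eq_singleton_iff_unique_mem.mpr
        constructor
        · exact ⟨1, Subgroup.one_mem _, map_one Φ⟩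
        · rintro y ⟨x, hx, rfl⟩
          have hxk : x ∈ Φ.ker := by rw [hkerΦ]; exact hx
          exact hxk
    rw [himg, Subgroup.closure_union, Subgroup.closure_singleton_one, sup_bot_eq]
    have hre : (Set.range fun x : (∀ j : Fin s, Multiplicative (ZMod (p ^ b j))) =>
        x ^ p ^ c) = ((powMonoidHom (p ^ c) : (∀ j : Fin s, Multiplicative (ZMod (p ^ b j))) →*
        (∀ j : Fin s, Multiplicative (ZMod (p ^ b j)))).range : Set _) := rfl
    rw [hre, Subgroup.closure_eq]
  have hZle_iff : (Subgroup.center G ≤ H) ↔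
      Ψ.ker ≤ (powMonoidHom (p ^ c) : (∀ j : Fin s, Multiplicative (ZMod (p ^ b j))) →*
        (∀ j : Fin s, Multiplicative (ZMod (p ^ b j)))).range := by
    constructor
    · intro hle x hx
      obtain ⟨g, rfl⟩ := hΦs x
      have hg : g ∈ Subgroup.center G := by
        rw [MonoidHom.mem_ker, hΨΦ g, MulEquiv.map_eq_one_iff,
          QuotientGroup.eq_one_iff] at hx
        exact hx
      rw [← hmapH]
      exact Subgroup.mem_map_of_mem Φ (hle hg)
    · intro hle g hg
      have h1 : Φ g ∈ Ψ.ker := by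
        rw [MonoidHom.mem_ker, hΨΦ g, MulEquiv.map_eq_one_iff, QuotientGroup.eq_one_iff]
        exact hg
      have h2' : Φ g ∈ Subgroup.map Φ H := by rw [hmapH]; exact hle h1
      rw [Subgroup.mem_map] at h2'
      obtain ⟨h', hh', heq⟩ := h2'
      have h3 : h'⁻¹ * g ∈ commutator G := by
        rw [← hkerΦ, MonoidHom.mem_ker, map_mul, map_inv, heq]
        simp
      have h4 : g = h' * (h'⁻¹ * g) := by group
      rw [h4]
      exact Subgroup.mul_mem _ hh' (hKH h3)
  have hexpY : Monoid.exponent (∀ i : Fin r, Multiplicative (ZMod (p ^ a i))) = p ^ c := by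
    rw [← hc]
    exact (Monoid.exponent_eq_of_mulEquiv eZ).symm
  have hRker : (powMonoidHom (p ^ c) : (∀ j : Fin s, Multiplicative (ZMod (p ^ b j))) →*
      (∀ j : Fin s, Multiplicative (ZMod (p ^ b j)))).range ≤ Ψ.ker := by
    rintro _ ⟨x, rfl⟩
    rw [MonoidHom.mem_ker]
    show Ψ (x ^ p ^ c) = 1
    rw [map_pow, ← hexpY]
    exact Monoid.pow_exponent_eq_one _
  have hCY : Nat.card (∀ i : Fin r, Multiplicative (ZMod (p ^ a i))) = ∏ i, p ^ a i := by
    rw [Nat.card_pi]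
    refine Finset.prod_congr rfl fun i _ => ?_
    haveI : NeZero (p ^ a i) := ⟨(pow_pos hpp.pos _).ne'⟩
    rw [Nat.card_congr Multiplicative.toAdd, Nat.card_zmod]
  have hkerPow : Nat.card ((powMonoidHom (p ^ c) :
      (∀ j : Fin s, Multiplicative (ZMod (p ^ b j))) →*
      (∀ j : Fin s, Multiplicative (ZMod (p ^ b j)))).ker) = ∏ j, p ^ min (b j) c := by
    rw [card_ker_pow_pi]
    exact Finset.prod_congr rfl fun j _ => card_ker_pow_zmod hpp (b j) c
  have hcard1 := card_range_mul_card_ker Ψ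
  have hrangeΨ : Nat.card Ψ.range = ∏ i, p ^ a i := by
    rw [MonoidHom.range_eq_top.mpr hΨs, ← hCY]
    exact Subgroup.card_top
  have hcard2 := card_range_mul_card_ker (powMonoidHom (p ^ c) :
      (∀ j : Fin s, Multiplicative (ZMod (p ^ b j))) →*
      (∀ j : Fin s, Multiplicative (ZMod (p ^ b j))))
  rw [hkerPow] at hcard2
  rw [hrangeΨ] at hcard1
  have hposK : 0 < Nat.card Ψ.ker := Nat.card_pos
  have hposR : 0 < Nat.card ((powMonoidHom (p ^ c) :
      (∀ j : Fin s, Multiplicative (ZMod (p ^ b j))) →*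
      (∀ j : Fin s, Multiplicative (ZMod (p ^ b j)))).range) := Nat.card_pos
  have hposA : 0 < ∏ i, p ^ a i := Finset.prod_pos fun i _ => pow_pos hpp.pos _
  have hposM : 0 < ∏ j, p ^ min (b j) c := Finset.prod_pos fun j _ => pow_pos hpp.pos _
  have halways : Nat.card ((powMonoidHom (p ^ c) :
      (∀ j : Fin s, Multiplicative (ZMod (p ^ b j))) →*
      (∀ j : Fin s, Multiplicative (ZMod (p ^ b j)))).range) ≤ Nat.card Ψ.ker :=
    Subgroup.card_le_of_le hRker
  have hAM_iff : ((∑ i, a i) = ∑ j, min (b j) c) ↔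
      (∏ i, p ^ a i) = ∏ j, p ^ min (b j) c := by
    rw [Finset.prod_pow_eq_pow_sum, Finset.prod_pow_eq_pow_sum]
    constructor
    · intro h; rw [h]
    · intro h; exact Nat.pow_right_injective hpp.two_le h
  have hX12 : (∏ i, p ^ a i) * Nat.card Ψ.ker =
      Nat.card ((powMonoidHom (p ^ c) :
        (∀ j : Fin s, Multiplicative (ZMod (p ^ b j))) →*
        (∀ j : Fin s, Multiplicative (ZMod (p ^ b j)))).range) * ∏ j, p ^ min (b j) c := by
    rw [hcard1]
    exact hcard2.symm
  have hnum : (Subgroup.center G ≤ H) ↔ ((∑ i, a i) = ∑ j, min (b j) c) := by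
    rw [hZle_iff, hAM_iff]
    constructor
    · intro hle
      have hEQc : Nat.card Ψ.ker = Nat.card ((powMonoidHom (p ^ c) :
          (∀ j : Fin s, Multiplicative (ZMod (p ^ b j))) →*
          (∀ j : Fin s, Multiplicative (ZMod (p ^ b j)))).range) :=
        le_antisymm (Subgroup.card_le_of_le hle) halways
      apply Nat.eq_of_mul_eq_mul_right hposR
      calc (∏ i, p ^ a i) * Nat.card ((powMonoidHom (p ^ c) :
            (∀ j : Fin s, Multiplicative (ZMod (p ^ b j))) →*
            (∀ j : Fin s, Multiplicative (ZMod (p ^ b j)))).range)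
          = (∏ i, p ^ a i) * Nat.card Ψ.ker := by rw [hEQc]
        _ = Nat.card ((powMonoidHom (p ^ c) :
            (∀ j : Fin s, Multiplicative (ZMod (p ^ b j))) →*
            (∀ j : Fin s, Multiplicative (ZMod (p ^ b j)))).range) * ∏ j, p ^ min (b j) c :=
            hX12
        _ = (∏ j, p ^ min (b j) c) * Nat.card ((powMonoidHom (p ^ c) :
            (∀ j : Fin s, Multiplicative (ZMod (p ^ b j))) →*
            (∀ j : Fin s, Multiplicative (ZMod (p ^ b j)))).range) := mul_comm _ _
    · intro hAM
      have hEQc : Nat.card Ψ.ker = Nat.card ((powMonoidHom (p ^ c) :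
          (∀ j : Fin s, Multiplicative (ZMod (p ^ b j))) →*
          (∀ j : Fin s, Multiplicative (ZMod (p ^ b j)))).range) := by
        apply Nat.eq_of_mul_eq_mul_left hposM
        calc (∏ j, p ^ min (b j) c) * Nat.card Ψ.ker
            = (∏ i, p ^ a i) * Nat.card Ψ.ker := by rw [hAM]
          _ = Nat.card ((powMonoidHom (p ^ c) :
              (∀ j : Fin s, Multiplicative (ZMod (p ^ b j))) →*
              (∀ j : Fin s, Multiplicative (ZMod (p ^ b j)))).range) * ∏ j, p ^ min (b j) c :=
              hX12
          _ = (∏ j, p ^ min (b j) c) * Nat.card ((powMonoidHom (p ^ c) :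
              (∀ j : Fin s, Multiplicative (ZMod (p ^ b j))) →*
              (∀ j : Fin s, Multiplicative (ZMod (p ^ b j)))).range) := mul_comm _ _
      have hset : ((powMonoidHom (p ^ c) : (∀ j : Fin s, Multiplicative (ZMod (p ^ b j))) →*
          (∀ j : Fin s, Multiplicative (ZMod (p ^ b j)))).range :
            Set (∀ j : Fin s, Multiplicative (ZMod (p ^ b j)))) =
          (Ψ.ker : Set (∀ j : Fin s, Multiplicative (ZMod (p ^ b j)))) := by
        apply Set.eq_of_subset_of_ncard_le
        · exact SetLike.coe_subset_coe.mpr hRker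
        · rw [← Nat.card_coe_set_eq, ← Nat.card_coe_set_eq]
          exact le_of_eq hEQc
        · exact Set.toFinite _
      rw [SetLike.coe_set_eq] at hset
      rw [← hset]
  have hac : ∀ i, a i ≤ c := by
    intro i
    haveI : NeZero (p ^ a i) := ⟨(pow_pos hpp.pos _).ne'⟩
    have h1 : (Pi.mulSingle i (Multiplicative.ofAdd (1 : ZMod (p ^ a i))) :
        (∀ i : Fin r, Multiplicative (ZMod (p ^ a i)))) ^ p ^ c = 1 := by
      rw [← hexpY]; exact Monoid.pow_exponent_eq_one _
    have h2' := congrFun h1 i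
    rw [Pi.pow_apply, Pi.mulSingle_eq_same, Pi.one_apply] at h2'
    have h3 : ((p ^ c : ℕ) : ZMod (p ^ a i)) = 0 := by
      have h3' := congrArg Multiplicative.toAdd h2'
      simpa [toAdd_pow, nsmul_eq_mul] using h3'
    have h4 := (ZMod.natCast_eq_zero_iff _ _).mp h3
    exact (Nat.pow_dvd_pow_iff_le_right hpp.one_lt).mp h4
  obtain ⟨hrs, hab⟩ := pointwise_le hpp a b ha_pos ha_anti hb_anti Ψ hΨs
  have hcomb := comb_iff (p := p) hpp.one_lt a b hc1 hb_pos ha_anti hk hk_max hac hrs hab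
  rw [hnum, hcomb] at hmain
  rw [hmain, hcγ]
  tauto

end Main
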